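/- arXiv:2304.05061 — 3 statements merged into one kernel-verified Lean document; each statement's English description precedes it below -/
import Mathlib

section
/- The perimeter generating series p(x) = 2π·Σ_{k≥0} a_{2k} x^{2k} with a_{2k} = binom(2k,k)²/((1−2k)·16^k) satisfies the differential equation (x − x³)·p''(x) + (1 − x²)·p'(x) + x·p(x) = 0; equivalently, the coefficients satisfy (k−1)(k+1)·a_k = (k+2)²·a_{k+2} with a_0 = 2π, a_1 = 0 and a_{2k+1} = 0 for all k. -/
open PowerSeries

private lemma coeff_derivativeFun' (f : ℝ⟦X⟧) (n : ℕ) :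
    coeff n (derivativeFun f) = coeff (n + 1) f * (n + 1) := coeff_derivative f n

private lemma constantCoeff_derivativeFun' (f : ℝ⟦X⟧) :
    constantCoeff (derivativeFun f) = coeff 1 f := by
  simpa using coeff_derivativeFun' f 0

private lemma coeff_ode (a : ℕ → ℝ) (k : ℕ) :
    coeff (R := ℝ) (k+1) ((X - X ^ 3) * derivativeFun (derivativeFun (PowerSeries.mk a)) +
          (1 - X ^ 2) * derivativeFun (PowerSeries.mk a) + X * PowerSeries.mk a) =
    ((k:ℝ)+2)^2 * a (k+2) - ((k:ℝ)-1)*((k:ℝ)+1) * a k := by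
  have hX : (X : ℝ⟦X⟧) = X ^ 1 := (pow_one _).symm
  rw [sub_mul, sub_mul, one_mul, map_add, map_add, map_sub, map_sub, hX,
    show ((X:ℝ⟦X⟧)^1)^3 = X^3 by ring, show ((X:ℝ⟦X⟧)^1)^2 = X^2 by ring,
    coeff_X_pow_mul', coeff_X_pow_mul', coeff_X_pow_mul', coeff_X_pow_mul']
  rcases k with _ | _ | j <;>
    simp [coeff_derivativeFun', constantCoeff_derivativeFun', coeff_mk] <;> ring

private lemma coeff_ode_zero (a : ℕ → ℝ) :
    coeff (R := ℝ) 0 ((X - X ^ 3) * derivativeFun (derivativeFun (PowerSeries.mk a)) +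
          (1 - X ^ 2) * derivativeFun (PowerSeries.mk a) + X * PowerSeries.mk a) = a 1 := by
  have hX : (X : ℝ⟦X⟧) = X ^ 1 := (pow_one _).symm
  rw [sub_mul, sub_mul, one_mul, map_add, map_add, map_sub, map_sub, hX,
    show ((X:ℝ⟦X⟧)^1)^3 = X^3 by ring, show ((X:ℝ⟦X⟧)^1)^2 = X^2 by ring,
    coeff_X_pow_mul', coeff_X_pow_mul', coeff_X_pow_mul', coeff_X_pow_mul']
  simp [coeff_derivativeFun', constantCoeff_derivativeFun', coeff_mk]

private lemma central (k : ℕ) : (k+1) * (k+1) * (2*k+2).choose (k+1)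
    = (2*k+1) * (2*k+2) * (2*k).choose k := by
  have h1 : (2*k+2) * (2*k+1).choose k = (2*k+2).choose (k+1) * (k+1) :=
    Nat.add_one_mul_choose_eq (2*k+1) k
  have h2 : (2*k+1) * (2*k).choose k = (2*k+1).choose (k+1) * (k+1) :=
    Nat.add_one_mul_choose_eq (2*k) k
  have h3 : (2*k+1).choose (k+1) = (2*k+1).choose k := Nat.choose_symm_half k
  nlinarith [h1, h2, h3]

/-- **Euler's differential equation for the perimeter of the ellipse.**
For a formal power series `p(x) = ∑ a_k x^k ∈ ℝ⟦x⟧` with `a₀ = 2π` and `a₁ = 0`,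
the differential equation `(x − x³)p'' + (1 − x²)p' + x·p = 0` is equivalent to the
recurrence `(k−1)(k+1)a_k = (k+2)²a_{k+2}` for all `k ≥ 0`; and under this equation the
coefficients are `a_{2k} = 2π·binom(2k,k)²/((1−2k)16^k)` and `a_{2k+1} = 0`. -/
theorem ellipse_perimeter_ode (a : ℕ → ℝ) (ha0 : a 0 = 2 * Real.pi) (ha1 : a 1 = 0) :
    ((X - X ^ 3) * derivativeFun (derivativeFun (PowerSeries.mk a)) +
          (1 - X ^ 2) * derivativeFun (PowerSeries.mk a) + X * PowerSeries.mk a = 0 ↔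
        ∀ k : ℕ, ((k : ℝ) - 1) * ((k : ℝ) + 1) * a k = ((k : ℝ) + 2) ^ 2 * a (k + 2)) ∧
      ((X - X ^ 3) * derivativeFun (derivativeFun (PowerSeries.mk a)) +
          (1 - X ^ 2) * derivativeFun (PowerSeries.mk a) + X * PowerSeries.mk a = 0 →
        (∀ k : ℕ, a (2 * k) =
            2 * Real.pi * ((2 * k).choose k : ℝ) ^ 2 / ((1 - 2 * (k : ℝ)) * 16 ^ k)) ∧
          ∀ k : ℕ, a (2 * k + 1) = 0) := by
  have hiff : ((X - X ^ 3) * derivativeFun (derivativeFun (PowerSeries.mk a)) +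
          (1 - X ^ 2) * derivativeFun (PowerSeries.mk a) + X * PowerSeries.mk a = 0 ↔
        ∀ k : ℕ, ((k : ℝ) - 1) * ((k : ℝ) + 1) * a k = ((k : ℝ) + 2) ^ 2 * a (k + 2)) := by
    constructor
    · intro h k
      have := congrArg (coeff (R := ℝ) (k+1)) h
      rw [coeff_ode, map_zero] at this
      linarith
    · intro h
      ext n
      rw [map_zero]
      rcases n with _ | k
      · rw [coeff_ode_zero, ha1]
      · rw [coeff_ode]
        linarith [h k]
  refine ⟨hiff, fun h => ?_⟩
  have hrec := hiff.mp h
  constructor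
  · intro k
    induction k with
    | zero => simp [ha0]
    | succ k ih =>
      have hr := hrec (2*k)
      push_cast at hr
      have hne1 : (1:ℝ) - 2*(k:ℝ) ≠ 0 := by
        intro hh
        have : (2*(k:ℝ)) = 1 := by linarith
        exact (by omega : 2*k ≠ 1) (by exact_mod_cast this)
      have hne2 : (1:ℝ) - 2*((k:ℝ)+1) ≠ 0 := by
        intro hh
        have : (2*(k:ℝ)+2) = 1 := by linarith
        exact (by omega : 2*k+2 ≠ 1) (by exact_mod_cast this)
      have h16 : (16:ℝ)^k ≠ 0 := by positivity
      have hk1 : ((k:ℝ)+1) ≠ 0 := by positivity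
      have hc : ((k:ℝ)+1) * ((k:ℝ)+1) * ((2*k+2).choose (k+1) : ℝ)
          = (2*(k:ℝ)+1) * (2*(k:ℝ)+2) * ((2*k).choose k : ℝ) := by
        exact_mod_cast congrArg (Nat.cast : ℕ → ℝ) (central k)
      have hA : a (2*k+2) = ((2*(k:ℝ))-1)*(2*(k:ℝ)+1)*a (2*k) / (2*(k:ℝ)+2)^2 := by
        rw [eq_div_iff (by positivity)]
        linarith
      have hc2 : ((2*k+2).choose (k+1) : ℝ)
          = (2*(k:ℝ)+1)*(2*(k:ℝ)+2)*((2*k).choose k : ℝ) / (((k:ℝ)+1)^2) := by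
        rw [eq_div_iff (by positivity)]
        nlinarith [hc]
      rw [show 2*(k+1) = 2*k+2 by ring, hA, ih, hc2]
      push_cast
      rw [pow_succ]
      field_simp
      ring
  · intro k
    induction k with
    | zero => simpa using ha1
    | succ k ih =>
      have hr := hrec (2*k+1)
      push_cast at hr
      have h0 : ((2*(k:ℝ)+1)+2)^2 ≠ 0 := by positivity
      have : ((2*(k:ℝ)+1)+2)^2 * a (2*k+1+2) = 0 := by
        rw [← hr, ih]; ring
      have := (mul_eq_zero.mp this).resolve_left h0
      rw [show 2*(k+1)+1 = 2*k+1+2 by ring]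
      exact this
end

section
/- For the Legendre-type equation (4x² − 4x)·y'' + (8x − 4)·y' + y = 0, a power series solution y = Σ b_k x^k with b_0 = 2π exists and its coefficients satisfy (2k+1)²·b_k = 4(k+1)²·b_{k+1}, so b_k = 2π·binom(2k,k)²/16^k for all k ≥ 0. -/
open PowerSeries

noncomputable def legendreCoeff (k : ℕ) : ℝ :=
  2 * Real.pi * ((2 * k).choose k : ℝ) ^ 2 / 16 ^ k

lemma legendreCoeff_rec (k : ℕ) :
    (2 * (k : ℝ) + 1) ^ 2 * legendreCoeff k = 4 * ((k : ℝ) + 1) ^ 2 * legendreCoeff (k + 1) := by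
  have hc : ((k : ℝ) + 1) * ((2 * (k + 1)).choose (k + 1) : ℝ)
      = 2 * (2 * (k : ℝ) + 1) * ((2 * k).choose k : ℝ) := by
    have := Nat.succ_mul_centralBinom_succ k
    simp only [Nat.centralBinom] at this
    exact_mod_cast this
  have h16 : (16 : ℝ) ^ (k + 1) ≠ 0 := by positivity
  have h16' : (16 : ℝ) ^ k ≠ 0 := by positivity
  unfold legendreCoeff
  field_simp
  rw [pow_succ]
  linear_combination (-4 * 16 ^ k *
    ((((k:ℝ)+1) * ((2 * (k + 1)).choose (k + 1) : ℝ)) +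
      2 * (2 * (k : ℝ) + 1) * ((2 * k).choose k : ℝ))) * hc

lemma legendre_ode (b : ℕ → ℝ)
    (hrec : ∀ k : ℕ, (2 * (k : ℝ) + 1) ^ 2 * b k = 4 * ((k : ℝ) + 1) ^ 2 * b (k + 1)) :
    (4 * X ^ 2 - 4 * X) * derivativeFun (derivativeFun (PowerSeries.mk b)) +
        (8 * X - 4) * derivativeFun (PowerSeries.mk b) + PowerSeries.mk b = 0 := by
  set g2 := derivativeFun (derivativeFun (PowerSeries.mk b)) with hg2
  set g1 := derivativeFun (PowerSeries.mk b) with hg1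
  have e1 : ∀ m, (coeff m) g1 = b (m+1) * (m+1) := by
    intro m; rw [hg1, show ∀ f : ℝ⟦X⟧, derivativeFun f = derivative ℝ f from fun _ => rfl, coeff_derivative, coeff_mk]
  have e2 : ∀ m, (coeff m) g2 = b (m+2) * (m+2) * (m+1) := by
    intro m; rw [hg2, show ∀ f : ℝ⟦X⟧, derivativeFun f = derivative ℝ f from fun _ => rfl, coeff_derivative, e1]; push_cast; ring
  have key : (4 * X ^ 2 - 4 * X) * g2 + (8 * X - 4) * g1 + PowerSeries.mk b
      = (C 4) * (X ^ 2 * g2) - (C 4) * (X * g2) + (C 8) * (X * g1) - (C 4) * g1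
        + PowerSeries.mk b := by
    simp only [map_ofNat]
    ring
  rw [key]
  ext n
  simp only [map_add, map_sub, coeff_C_mul, map_zero, coeff_mk]
  rcases n with _ | n
  · simp only [coeff_X_pow_mul' , coeff_mul_X_pow', if_neg (by norm_num : ¬ (2:ℕ) ≤ 0)]
    rw [show (X : ℝ⟦X⟧) * g2 = X^1 * g2 by ring, show (X : ℝ⟦X⟧) * g1 = X^1 * g1 by ring]
    rw [coeff_X_pow_mul', coeff_X_pow_mul', if_neg (by norm_num : ¬ (1:ℕ) ≤ 0), e1]
    push_cast
    linear_combination hrec 0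
  rcases n with _ | n
  · rw [show (X : ℝ⟦X⟧)^2 * g2 = X^2 * g2 by ring, coeff_X_pow_mul',
      if_neg (by norm_num : ¬ (2:ℕ) ≤ 1), coeff_succ_X_mul, coeff_succ_X_mul, e1, e2, e1]
    push_cast
    linear_combination hrec 1
  · rw [coeff_succ_X_mul, coeff_succ_X_mul, e1, e1, e2,
      show n + 1 + 1 = n + 2 from rfl, coeff_X_pow_mul g2 2 n, e2]
    have h := hrec (n + 2)
    simp only [show n + 1 + 2 = n + 3 from rfl, show n + 2 + 1 = n + 3 from rfl] at *
    push_cast at h ⊢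
    linear_combination h

/-- **Legendre's differential equation.** There is a power series solution
`y = ∑ b_k x^k ∈ ℝ⟦x⟧` of `(4x² − 4x)y'' + (8x − 4)y' + y = 0` with `b₀ = 2π`; its
coefficients satisfy the recurrence `(2k+1)²·b_k = 4(k+1)²·b_{k+1}`, and hence have the
closed form `b_k = 2π·binom(2k,k)²/16^k` for all `k ≥ 0`. -/
theorem legendre_ode_solution :
    ∃ b : ℕ → ℝ, b 0 = 2 * Real.pi ∧
      (4 * X ^ 2 - 4 * X) * derivativeFun (derivativeFun (PowerSeries.mk b)) +
          (8 * X - 4) * derivativeFun (PowerSeries.mk b) + PowerSeries.mk b = 0 ∧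
      (∀ k : ℕ, (2 * (k : ℝ) + 1) ^ 2 * b k = 4 * ((k : ℝ) + 1) ^ 2 * b (k + 1)) ∧
      ∀ k : ℕ, b k = 2 * Real.pi * ((2 * k).choose k : ℝ) ^ 2 / 16 ^ k := by
  refine ⟨legendreCoeff, ?_, legendre_ode _ legendreCoeff_rec, legendreCoeff_rec, fun k => rfl⟩
  simp [legendreCoeff]
end

section
/- Let p be a prime and f(x) ∈ 𝔽_p(x) ⊆ 𝔽_p((x)) a rational function expanded as a Laurent series f = Σ_n u_n x^n. Then the operator ∂ − b(x) with b = f (assuming b has a power series expansion Σ_{n≥0} u_n x^n) has vanishing p-curvature b^{(p−1)} + b^p = 0 if and only if u_n ≡ u_{(n+1)p−1} (mod p) for all n ≥ 0. -/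
open Polynomial

/-- Formal derivative of a rational function, via the quotient rule on the
canonical numerator/denominator representation. -/
noncomputable def rderiv {F : Type*} [Field F] (f : RatFunc F) : RatFunc F :=
  algebraMap (Polynomial F) (RatFunc F)
      (Polynomial.derivative f.num * f.denom - f.num * Polynomial.derivative f.denom) /
    algebraMap (Polynomial F) (RatFunc F) (f.denom ^ 2)

/-- algebraMap from polynomials to RatFunc, coerced to Laurent series. -/
lemma coe_algebraMap_poly {F : Type*} [Field F] (P : Polynomial F) :
    ((algebraMap (Polynomial F) (RatFunc F) P : RatFunc F) : LaurentSeries F) =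
      HahnSeries.ofPowerSeries ℤ F (P : PowerSeries F) := by
  rw [← IsScalarTower.algebraMap_apply]
  exact Polynomial.algebraMap_hahnSeries_apply ℤ P

lemma coe_rderiv {F : Type*} [Field F] (f : RatFunc F) (g : PowerSeries F)
    (h : (f : LaurentSeries F) = HahnSeries.ofPowerSeries ℤ F g) :
    ((rderiv f : RatFunc F) : LaurentSeries F) =
      HahnSeries.ofPowerSeries ℤ F (PowerSeries.derivative F g) := by
  have hden0 : (f.denom : PowerSeries F) ≠ 0 := fun hc =>
    f.denom_ne_zero (Polynomial.coe_injective F (hc.trans (Polynomial.coe_zero (R := F)).symm))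
  have hdenL : HahnSeries.ofPowerSeries ℤ F ((f.denom : PowerSeries F)) ≠ 0 := fun hc =>
    hden0 (HahnSeries.ofPowerSeries_injective (Γ := ℤ) (hc.trans (map_zero _).symm))
  -- numerator = g * denominator as power series
  have hnd : HahnSeries.ofPowerSeries ℤ F (f.num : PowerSeries F) /
      HahnSeries.ofPowerSeries ℤ F ((f.denom : PowerSeries F)) = (f : LaurentSeries F) := by
    rw [← coe_algebraMap_poly, ← coe_algebraMap_poly, ← map_div₀, f.num_div_denom]
  have key : (f.num : PowerSeries F) = g * (f.denom : PowerSeries F) := by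
    apply HahnSeries.ofPowerSeries_injective (Γ := ℤ)
    rw [map_mul, ← h, ← hnd, div_mul_cancel₀ _ hdenL]
  have key' : ((Polynomial.derivative f.num : Polynomial F) : PowerSeries F)
      = g * (Polynomial.derivative f.denom : PowerSeries F)
        + (f.denom : PowerSeries F) * PowerSeries.derivative F g := by
    have := congrArg (PowerSeries.derivative F) key
    rw [Derivation.leibniz] at this
    simpa [PowerSeries.derivative_coe, smul_eq_mul] using this
  rw [rderiv, map_div₀, coe_algebraMap_poly, coe_algebraMap_poly]
  have hnum : ((Polynomial.derivative f.num * f.denom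
        - f.num * Polynomial.derivative f.denom : Polynomial F) : PowerSeries F)
      = PowerSeries.derivative F g * ((f.denom ^ 2 : Polynomial F) : PowerSeries F) := by
    push_cast [Polynomial.coe_mul, Polynomial.coe_pow]
    rw [key, key']
    ring
  rw [hnum, map_mul, mul_div_assoc]
  have h2 : HahnSeries.ofPowerSeries ℤ F ((f.denom ^ 2 : Polynomial F) : PowerSeries F) ≠ 0 := by
    rw [Polynomial.coe_pow, map_pow]
    exact pow_ne_zero _ hdenL
  rw [div_self h2, mul_one]

lemma coe_rderiv_iterate {F : Type*} [Field F] (k : ℕ) (f : RatFunc F) (g : PowerSeries F)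
    (h : (f : LaurentSeries F) = HahnSeries.ofPowerSeries ℤ F g) :
    ((rderiv^[k] f : RatFunc F) : LaurentSeries F) =
      HahnSeries.ofPowerSeries ℤ F ((fun x => PowerSeries.derivative F x)^[k] g) := by
  induction k generalizing f g with
  | zero => simpa using h
  | succ k ih =>
    rw [Function.iterate_succ_apply, Function.iterate_succ_apply]
    exact ih _ _ (coe_rderiv f g h)

lemma coeff_derivative_iterate {R : Type*} [CommRing R] (k : ℕ) (f : PowerSeries R) (n : ℕ) :
    PowerSeries.coeff n ((fun x => PowerSeries.derivative R x)^[k] f) =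
      ((∏ i ∈ Finset.range k, (n + i + 1) : ℕ) : R) * PowerSeries.coeff (n + k) f := by
  induction k generalizing f with
  | zero => simp
  | succ k ih =>
    rw [Function.iterate_succ_apply, ih (PowerSeries.derivative R f),
      PowerSeries.coeff_derivative, Finset.prod_range_succ,
      show n + (k + 1) = (n + k) + 1 from rfl]
    push_cast
    ring

lemma prod_range_consec_zmod (p : ℕ) [hp : Fact p.Prime] (n : ℕ) :
    ((∏ i ∈ Finset.range (p - 1), (n + i + 1) : ℕ) : ZMod p) =
      if p ∣ n then -1 else 0 := by
  have hp2 : 2 ≤ p := hp.out.two_le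
  rw [Nat.cast_prod]
  by_cases h : p ∣ n
  · rw [if_pos h]
    have hn : ((n : ℕ) : ZMod p) = 0 := (ZMod.natCast_eq_zero_iff n p).mpr h
    have : ∀ i ∈ Finset.range (p - 1), ((n + i + 1 : ℕ) : ZMod p) = ((i + 1 : ℕ) : ZMod p) := by
      intro i _; push_cast [hn]; ring
    rw [Finset.prod_congr rfl this, ← Nat.cast_prod,
      Finset.prod_range_add_one_eq_factorial]
    exact ZMod.wilsons_lemma p
  · rw [if_neg h]
    have hrn : n % p ≤ n := Nat.mod_le n p
    have hrp : n % p < p := Nat.mod_lt _ (by omega)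
    have hr0 : n % p ≠ 0 := fun hc => h (Nat.dvd_of_mod_eq_zero hc)
    apply Finset.prod_eq_zero (i := p - n % p - 1) (by simp only [Finset.mem_range]; omega)
    rw [ZMod.natCast_eq_zero_iff]
    have h1 : n + (p - n % p - 1) + 1 = (n - n % p) + p := by omega
    have hdm := Nat.div_add_mod n p
    have h2 : n - n % p = p * (n / p) := by omega
    rw [h1, h2]
    exact Nat.dvd_add (Dvd.intro _ rfl) dvd_rfl

lemma coeff_pow_char_zmod (p : ℕ) [hp : Fact p.Prime] (g : PowerSeries (ZMod p)) (m : ℕ) :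
    PowerSeries.coeff m (g ^ p) =
      if p ∣ m then PowerSeries.coeff (m / p) g else 0 := by
  have hp0 : 0 < p := hp.out.pos
  set T : Polynomial (ZMod p) := PowerSeries.trunc (m + 1) g with hT
  have hcoeffT : ∀ i, i ≤ m → PowerSeries.coeff i (T : PowerSeries (ZMod p))
      = PowerSeries.coeff i g := by
    intro i hi
    rw [Polynomial.coeff_coe, hT, PowerSeries.coeff_trunc, if_pos (by omega)]
  have h1 : PowerSeries.coeff m (g ^ p)
      = PowerSeries.coeff m ((T : PowerSeries (ZMod p)) ^ p) := by
    obtain ⟨s, hs⟩ := sub_dvd_pow_sub_pow g (T : PowerSeries (ZMod p)) p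
    have h0 : PowerSeries.coeff m ((g - (T : PowerSeries (ZMod p))) * s) = 0 := by
      rw [PowerSeries.coeff_mul]
      apply Finset.sum_eq_zero
      intro q hq
      rw [Finset.HasAntidiagonal.mem_antidiagonal] at hq
      have : PowerSeries.coeff q.1 (g - (T : PowerSeries (ZMod p))) = 0 := by
        rw [map_sub, hcoeffT q.1 (by omega), sub_self]
      rw [this, zero_mul]
    have := congrArg (PowerSeries.coeff m) hs
    rw [map_sub, h0] at this
    exact sub_eq_zero.mp this
  have h2 : T ^ p = Polynomial.expand (ZMod p) p T := by
    rw [← Polynomial.map_frobenius_expand p, ZMod.frobenius_zmod, Polynomial.map_id]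
  rw [h1, ← Polynomial.coe_pow, Polynomial.coeff_coe, h2,
    Polynomial.coeff_expand hp0]
  split_ifs with h
  · rw [hT, PowerSeries.coeff_trunc, if_pos (by have := Nat.div_le_self m p; omega)]
  · rfl

/-- Let `p` be a prime and `b(x) ∈ 𝔽_p(x)` a rational function admitting a power series
expansion `b = ∑_{n≥0} u_n xⁿ`.  The operator `∂ − b(x)` has vanishing `p`-curvature
`b^{(p−1)} + b^p = 0` if and only if `u_n ≡ u_{(n+1)p−1} (mod p)` for all `n ≥ 0`. -/
theorem pCurvature_zero_iff_coeff_congruences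
    (p : ℕ) [Fact p.Prime] (b : RatFunc (ZMod p)) (u : ℕ → ZMod p)
    (hu : (b : LaurentSeries (ZMod p)) =
      HahnSeries.ofPowerSeries ℤ (ZMod p) (PowerSeries.mk u)) :
    rderiv^[p - 1] b + b ^ p = 0 ↔ ∀ n : ℕ, u n = u ((n + 1) * p - 1) := by
  have hp2 : 2 ≤ p := (Fact.out : p.Prime).two_le
  set g := PowerSeries.mk u with hg
  set D := fun x => PowerSeries.derivative (ZMod p) x with hD
  have hps : rderiv^[p - 1] b + b ^ p = 0 ↔ D^[p - 1] g + g ^ p = 0 := by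
    constructor
    · intro h
      apply HahnSeries.ofPowerSeries_injective (Γ := ℤ)
      rw [map_add, map_pow, ← coe_rderiv_iterate (p - 1) b g hu, ← hu,
        ← map_pow, ← map_add, h, map_zero, map_zero]
    · intro h
      apply (show Function.Injective (fun x : RatFunc (ZMod p) => (x : LaurentSeries (ZMod p))) from RingHom.injective _)
      beta_reduce
      rw [map_add, map_pow, coe_rderiv_iterate (p - 1) b g hu, hu,
        ← map_pow, ← map_add, h, map_zero, map_zero]
  have hcoeff : ∀ m, PowerSeries.coeff m (D^[p - 1] g + g ^ p)
      = if p ∣ m then u (m / p) - u (m + p - 1) else 0 := by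
    intro m
    rw [map_add, hD, coeff_derivative_iterate, prod_range_consec_zmod,
      coeff_pow_char_zmod, hg, PowerSeries.coeff_mk, PowerSeries.coeff_mk,
      show m + (p - 1) = m + p - 1 by omega]
    split_ifs with h
    · ring
    · ring
  rw [hps, PowerSeries.ext_iff]
  simp only [hcoeff, map_zero]
  constructor
  · intro h n
    have := h (n * p)
    rw [if_pos (Dvd.intro_left n rfl), Nat.mul_div_cancel _ (by omega)] at this
    have hn : n * p + p - 1 = (n + 1) * p - 1 := by rw [Nat.succ_mul]
    rw [hn] at this
    exact sub_eq_zero.mp this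
  · intro h m
    split_ifs with hd
    · obtain ⟨n, rfl⟩ := hd
      rw [Nat.mul_div_cancel_left _ (by omega : 0 < p)]
      have hn : p * n + p - 1 = (n + 1) * p - 1 := by
        rw [Nat.succ_mul, mul_comm]
      rw [hn, ← h n, sub_self]
    · rfl
end
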